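/- Let R = ℂ[t^α | 0 < α ∈ ℝ] and let M = ℂ·1 ⊕ R be the unitalization of R, with R acting by multiplication (in the unital ring obtained by adjoining 1). Then the canonical map R ⊗_R M → M is injective with image R, hence not surjective; in particular M is not a smooth R-module. -/

import Mathlib

open TensorProduct LinearMap

/-- The additive semigroup of positive real exponents. -/
abbrev PosReal := {x : ℝ // 0 < x}

/-- `R = ℂ[t^α | 0 < α ∈ ℝ]`. -/
abbrev Rpos := AddMonoidAlgebra ℂ PosReal

/-- `M = ℂ·1 ⊕ R`, the unitalization of `R`. -/
abbrev Munit := ℂ × Rpos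

/-- The bar differential `R ⊗ R ⊗ M → R ⊗ M` for a module structure given by a
bilinear action map `act`. -/
noncomputable def barDM (act : Rpos →ₗ[ℂ] Munit →ₗ[ℂ] Munit) :
    (Rpos ⊗[ℂ] (Rpos ⊗[ℂ] Munit)) →ₗ[ℂ] Rpos ⊗[ℂ] Munit :=
  (rTensor Munit (mul' ℂ Rpos)) ∘ₗ (TensorProduct.assoc ℂ Rpos Rpos Munit).symm.toLinearMap
    - lTensor Rpos (TensorProduct.lift act)

namespace Aux

noncomputable def sg (a : PosReal) : Rpos := AddMonoidAlgebra.single a (1:ℂ)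

noncomputable def half (a : PosReal) : PosReal := ⟨a.1 / 2, half_pos a.2⟩

lemma barDM_apply (act : Rpos →ₗ[ℂ] Munit →ₗ[ℂ] Munit) (r r' : Rpos) (m : Munit) :
    barDM act (r ⊗ₜ (r' ⊗ₜ m)) = (r * r') ⊗ₜ m - r ⊗ₜ (act r' m) := by
  simp [barDM]

end Aux
namespace Aux

variable (act : Rpos →ₗ[ℂ] Munit →ₗ[ℂ] Munit)

lemma rel (a b : PosReal) (m : Munit) :
    (LinearMap.range (barDM act)).mkQ (sg (a + b) ⊗ₜ m) =
    (LinearMap.range (barDM act)).mkQ (sg a ⊗ₜ (act (sg b) m)) := by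
  rw [← sub_eq_zero, ← map_sub, Submodule.mkQ_apply, Submodule.Quotient.mk_eq_zero]
  refine ⟨sg a ⊗ₜ (sg b ⊗ₜ m), ?_⟩
  rw [barDM_apply]
  congr 1
  simp [sg, AddMonoidAlgebra.single_mul_single]

end Aux
namespace Aux

variable (act : Rpos →ₗ[ℂ] Munit →ₗ[ℂ] Munit)
variable (hact : ∀ (r : Rpos) (c : ℂ) (s : Rpos), act r (c, s) = (0, c • r + r * s))

/-- class of `t^α ⊗ (0, t^β)` -/
noncomputable def K (a b : PosReal) : (Rpos ⊗[ℂ] Munit) ⧸ LinearMap.range (barDM act) :=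
  (LinearMap.range (barDM act)).mkQ (sg a ⊗ₜ ((0 : ℂ), sg b))

noncomputable def q (g : PosReal) := K act (half g) (half g)

include hact in
lemma step (a b c : PosReal) : K act (a + b) c = K act a (b + c) := by
  unfold K
  rw [rel act a b]
  congr 2
  rw [hact]
  simp [sg, AddMonoidAlgebra.single_mul_single]

include hact in
lemma Kshift (a b : PosReal) (e : ℝ) (he : 0 < e) (hlt : e < a.1) :
    K act a b = K act ⟨e, he⟩ ⟨a.1 - e + b.1, by have := b.2; linarith⟩ := by
  have h1 : a = ⟨e, he⟩ + ⟨a.1 - e, by linarith⟩ := by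
    ext; simp
  conv_lhs => rw [h1]
  rw [step act hact]
  rfl

include hact in
lemma keyEq (a b : PosReal) : K act a b = q act (a + b) := by
  set e : ℝ := min (a.1/2) ((a.1+b.1)/4) with hedef
  have ha : 0 < a.1 := a.2
  have hb : 0 < b.1 := b.2
  have he : 0 < e := by
    apply lt_min <;> linarith
  have h1 : e < a.1 := lt_of_le_of_lt (min_le_left _ _) (by linarith)
  have h2 : e < (half (a+b)).1 := by
    have : e ≤ (a.1+b.1)/4 := min_le_right _ _
    simp only [half]
    have : (a+b).1 = a.1 + b.1 := rfl
    rw [this]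
    linarith
  rw [Kshift act hact a b e he h1]
  unfold q
  rw [Kshift act hact (half (a+b)) (half (a+b)) e he h2]
  congr 1
  ext
  show a.1 - e + b.1 = (half (a+b)).1 - e + (half (a+b)).1
  show a.1 - e + b.1 = (a.1+b.1)/2 - e + (a.1+b.1)/2
  ring

include hact in
lemma keyC (a : PosReal) :
    (LinearMap.range (barDM act)).mkQ (sg a ⊗ₜ ((1:ℂ), 0)) = q act a := by
  have h1 : a = half a + half a := by ext; show a.1 = a.1/2 + a.1/2; ring
  conv_lhs => rw [h1]
  rw [rel act, hact]
  simp only [one_smul, mul_zero, add_zero]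
  rfl

end Aux
namespace Aux

variable (act : Rpos →ₗ[ℂ] Munit →ₗ[ℂ] Munit)
variable (hact : ∀ (r : Rpos) (c : ℂ) (s : Rpos), act r (c, s) = (0, c • r + r * s))

noncomputable def g : Rpos →ₗ[ℂ] (Rpos ⊗[ℂ] Munit) ⧸ LinearMap.range (barDM act) :=
  Finsupp.lsum ℂ (fun γ : PosReal => LinearMap.toSpanSingleton ℂ _ (q act γ)) ∘ₗ
    (AddMonoidAlgebra.coeffLinearEquiv ℂ).toLinearMap

lemma g_single (a : PosReal) (c : ℂ) :
    g act (AddMonoidAlgebra.single a c) = c • q act a := by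
  rw [g, LinearMap.comp_apply]
  erw [Finsupp.lsum_single]
  rw [toSpanSingleton_apply]

noncomputable def L : Rpos ⊗[ℂ] Munit →ₗ[ℂ] (Rpos ⊗[ℂ] Munit) ⧸ LinearMap.range (barDM act) :=
  (g act) ∘ₗ (LinearMap.snd ℂ ℂ Rpos) ∘ₗ (TensorProduct.lift act)

include hact in
lemma L1 (a : PosReal) (c : ℂ) :
    L act (AddMonoidAlgebra.single a c ⊗ₜ ((1:ℂ), (0:Rpos))) =
    (LinearMap.range (barDM act)).mkQ (AddMonoidAlgebra.single a c ⊗ₜ ((1:ℂ), (0:Rpos))) := by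
  have hs : (AddMonoidAlgebra.single a c : Rpos) = c • sg a := by
    simp [sg, Finsupp.smul_single]
  rw [hs, ← smul_tmul', map_smul, map_smul]
  congr 1
  show g act ((act (sg a) ((1:ℂ), 0)).2) = _
  rw [hact, one_smul, mul_zero, add_zero]
  show g act (AddMonoidAlgebra.single a 1) = _
  rw [g_single, one_smul, keyC act hact]

include hact in
lemma L2 (a b : PosReal) (c d : ℂ) :
    L act (AddMonoidAlgebra.single a c ⊗ₜ ((0:ℂ), AddMonoidAlgebra.single b d)) =
    (LinearMap.range (barDM act)).mkQ
      (AddMonoidAlgebra.single a c ⊗ₜ ((0:ℂ), AddMonoidAlgebra.single b d)) := by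
  have hs : (AddMonoidAlgebra.single a c : Rpos) = c • sg a := by
    simp [sg, Finsupp.smul_single]
  have hs' : ((0:ℂ), (AddMonoidAlgebra.single b d : Rpos)) =
      d • (((0:ℂ), (sg b : Rpos)) : Munit) := by
    simp [sg, Prod.smul_def, Finsupp.smul_single]
  rw [hs, hs', tmul_smul, ← smul_tmul', map_smul, map_smul, map_smul, map_smul]
  congr 1
  congr 1
  show g act ((act (sg a) ((0:ℂ), sg b)).2) = _
  rw [hact, zero_smul, zero_add]
  have : (sg a : Rpos) * sg b = AddMonoidAlgebra.single (a + b) 1 := by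
    simp [sg, AddMonoidAlgebra.single_mul_single]
  rw [this, g_single, one_smul, ← keyEq act hact]
  rfl

end Aux
namespace Aux

variable (act : Rpos →ₗ[ℂ] Munit →ₗ[ℂ] Munit)
variable (hact : ∀ (r : Rpos) (c : ℂ) (s : Rpos), act r (c, s) = (0, c • r + r * s))

include hact in
lemma Lzero (a : PosReal) (c : ℂ) (s : Rpos) :
    L act (AddMonoidAlgebra.single a c ⊗ₜ ((0:ℂ), s)) =
    (LinearMap.range (barDM act)).mkQ (AddMonoidAlgebra.single a c ⊗ₜ ((0:ℂ), s)) := by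
  induction s using AddMonoidAlgebra.induction_linear with
  | zero =>
      rw [show (((0:ℂ), (0 : Rpos)) : Munit) = (0 : Munit) from rfl, tmul_zero,
        map_zero, map_zero]
  | add f g hf hg =>
      rw [show (((0:ℂ), (f + g : Rpos)) : Munit)
          = (((0:ℂ), f) : Munit) + (((0:ℂ), g) : Munit) from by
            rw [Prod.mk_add_mk, add_zero],
        tmul_add, map_add, map_add, hf, hg]
  | single b d => exact L2 act hact a b c d

include hact in
lemma main : L act = (LinearMap.range (barDM act)).mkQ := by
  apply TensorProduct.ext'
  intro r m
  induction r using AddMonoidAlgebra.induction_linear with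
  | zero => rw [zero_tmul, map_zero, map_zero]
  | add f g hf hg =>
      rw [add_tmul, map_add, map_add,
        hf, hg]
  | single a c =>
    obtain ⟨cm, s⟩ := m
    have hm : ((cm, s) : Munit) = cm • (((1:ℂ), (0:Rpos)) : Munit) + ((0:ℂ), s) := by
      ext <;> simp
    rw [hm, tmul_add, map_add, map_add, tmul_smul, map_smul, map_smul, L1 act hact,
      Lzero act hact]

end Aux

/-- For `M = ℂ·1 ⊕ R` the unitalization of `R = ℂ[t^α | 0 < α ∈ ℝ]`, with action
`r · (c, s) = (0, c·r + r·s)`, the canonical map `R ⊗_R M → M` is injective with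
image `R = {0} × R`, hence not surjective; in particular `M` is not smooth. -/
theorem unitalization_not_smooth (act : Rpos →ₗ[ℂ] Munit →ₗ[ℂ] Munit)
    (hact : ∀ (r : Rpos) (c : ℂ) (s : Rpos), act r (c, s) = (0, c • r + r * s)) :
    ∀ f : ((Rpos ⊗[ℂ] Munit) ⧸ LinearMap.range (barDM act)) →ₗ[ℂ] Munit,
      f ∘ₗ (LinearMap.range (barDM act)).mkQ = TensorProduct.lift act →
      Function.Injective f ∧
      LinearMap.range f = (⊥ : Submodule ℂ ℂ).prod (⊤ : Submodule ℂ Rpos) ∧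
      ¬ Function.Surjective f ∧ ¬ Function.Bijective f := by
  intro f hf
  have hfmk : ∀ y : Rpos ⊗[ℂ] Munit, f ((LinearMap.range (barDM act)).mkQ y) =
      TensorProduct.lift act y := fun y => LinearMap.congr_fun hf y
  have hfst : ∀ y : Rpos ⊗[ℂ] Munit, (TensorProduct.lift act y).1 = 0 := by
    intro y
    induction y using TensorProduct.induction_on with
    | zero => simp
    | tmul r m =>
        obtain ⟨c, s⟩ := m
        rw [lift.tmul, hact]
    | add x y hx hy => rw [map_add, Prod.fst_add, hx, hy, add_zero]
  have hker : ∀ z, f z = 0 → z = 0 := by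
    intro z hz
    obtain ⟨y, rfl⟩ := (LinearMap.range (barDM act)).mkQ_surjective z
    have h1 : TensorProduct.lift act y = 0 := by rw [← hfmk]; exact hz
    have h2 : Aux.L act y = (LinearMap.range (barDM act)).mkQ y :=
      LinearMap.congr_fun (Aux.main act hact) y
    rw [← h2]
    simp [Aux.L, h1]
  have hinj : Function.Injective f := by
    intro x y h
    have := hker (x - y) (by rw [map_sub, h, sub_self])
    exact sub_eq_zero.mp this
  have hrange : LinearMap.range f = (⊥ : Submodule ℂ ℂ).prod (⊤ : Submodule ℂ Rpos) := by
    apply le_antisymm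
    · rintro _ ⟨z, rfl⟩
      obtain ⟨y, rfl⟩ := (LinearMap.range (barDM act)).mkQ_surjective z
      rw [hfmk]
      exact Submodule.mem_prod.mpr ⟨hfst y, trivial⟩
    · rintro ⟨c, s⟩ ⟨hc, -⟩
      have hc0 : c = 0 := hc
      subst hc0
      refine ⟨(LinearMap.range (barDM act)).mkQ (s ⊗ₜ ((1:ℂ), 0)), ?_⟩
      rw [hfmk, lift.tmul, hact, one_smul, mul_zero, add_zero]
  have hnsurj : ¬ Function.Surjective f := by
    intro h
    obtain ⟨z, hz⟩ := h ((1:ℂ), (0:Rpos))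
    have : ((1:ℂ), (0:Rpos)) ∈ LinearMap.range f := ⟨z, hz⟩
    rw [hrange] at this
    exact one_ne_zero (Submodule.mem_prod.mp this).1
  exact ⟨hinj, hrange, hnsurj, fun h => hnsurj h.2⟩
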